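/- arXiv:1604.06206 — 9 statements merged into one kernel-verified Lean document; each statement's English description precedes it below -/
import Mathlib

section
/- Let b ≥ 1 and a > 0 be real numbers, let N ∈ ℕ, let w = (w₁,…,w_N) be a real vector with Σᵢ wᵢ² = a, and let d, e be nonnegative integers with d + be > 0 and let m = (m₁,…,m_N) be nonnegative integers with Σᵢ mᵢ² = 2de+1. Set μ := (Σᵢ mᵢwᵢ)/(d+be), h := d − be, and define the error vector ε by εᵢ := mᵢ − ((d+be)/√(2ba))·wᵢ. Then: (i) μ > √(a/(2b)) if and only if Σᵢ εᵢwᵢ > 0; (ii) if μ > √(a/(2b)), then Σᵢ εᵢ² < 1 − h²/(2b), and in particular |h| < √(2b). -/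
/-- Let `b ≥ 1`, `a > 0`, `w : Fin N → ℝ` with `Σ wᵢ² = a`, and let `d, e, m` be nonnegative
integers with `d + be > 0` and `Σ mᵢ² = 2de+1`. With `μ = (Σ mᵢwᵢ)/(d+be)`, `h = d − be` and
`εᵢ = mᵢ − ((d+be)/√(2ba))·wᵢ`, we have:
(i) `μ > √(a/(2b))` iff `Σ εᵢwᵢ > 0`;
(ii) if `μ > √(a/(2b))` then `Σ εᵢ² < 1 − h²/(2b)` and `|h| < √(2b)`. -/
theorem stmt7 (b a : ℝ) (hb : 1 ≤ b) (ha : 0 < a) (N : ℕ) (w : Fin N → ℝ)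
    (hw : ∑ i, (w i) ^ 2 = a) (d e : ℕ) (hde : 0 < (d : ℝ) + b * e)
    (m : Fin N → ℕ) (hm : ∑ i, ((m i : ℝ)) ^ 2 = 2 * d * e + 1) :
    ((∑ i, (m i : ℝ) * w i) / ((d : ℝ) + b * e) > Real.sqrt (a / (2 * b)) ↔
      (∑ i, ((m i : ℝ) - (((d : ℝ) + b * e) / Real.sqrt (2 * b * a)) * w i) * w i) > 0) ∧
    ((∑ i, (m i : ℝ) * w i) / ((d : ℝ) + b * e) > Real.sqrt (a / (2 * b)) →
      (∑ i, ((m i : ℝ) - (((d : ℝ) + b * e) / Real.sqrt (2 * b * a)) * w i) ^ 2)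
          < 1 - ((d : ℝ) - b * e) ^ 2 / (2 * b) ∧
        |(d : ℝ) - b * e| < Real.sqrt (2 * b)) := by
  have hb0 : (0:ℝ) < b := lt_of_lt_of_le one_pos hb
  have hr0 : (0:ℝ) < 2 * b * a := by positivity
  set r := Real.sqrt (2 * b * a) with hrdef
  have hrpos : 0 < r := Real.sqrt_pos.mpr hr0
  have hr2 : r ^ 2 = 2 * b * a := Real.sq_sqrt hr0.le
  set s : ℝ := (d : ℝ) + b * e with hs
  set M := ∑ i, (m i : ℝ) * w i with hM
  -- √(a/(2b)) = a / r
  have hsqrt : Real.sqrt (a / (2 * b)) = a / r := by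
    have h1 : (a / r) ^ 2 = a / (2 * b) := by
      rw [div_pow, hr2]; field_simp
    rw [← h1, Real.sqrt_sq (by positivity)]
  -- expand the linear sum
  have hlin : (∑ i, ((m i : ℝ) - (s / r) * w i) * w i) = M - (s / r) * a := by
    rw [← hw]
    simp only [sub_mul, Finset.sum_sub_distrib, ← Finset.mul_sum]
    congr 1
    · rw [Finset.mul_sum]
      congr 1; funext i; ring
  have hiff : M / s > Real.sqrt (a / (2 * b)) ↔ M - (s / r) * a > 0 := by
    rw [hsqrt, gt_iff_lt, div_lt_div_iff₀ hrpos hde, gt_iff_lt, sub_pos,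
      show s / r * a = a * s / r by ring, div_lt_iff₀ hrpos]
  constructor
  · rw [hlin]; exact hiff
  · intro hmu
    have hMgt : M - (s / r) * a > 0 := hiff.mp hmu
    -- expand the quadratic sum
    have hquad : (∑ i, ((m i : ℝ) - (s / r) * w i) ^ 2)
        = (2 * d * e + 1) - 2 * (s / r) * M + (s / r) ^ 2 * a := by
      rw [← hm, ← hw, hM]
      rw [Finset.mul_sum, Finset.mul_sum, ← Finset.sum_sub_distrib, ← Finset.sum_add_distrib]
      exact Finset.sum_congr rfl fun i _ => by ring
    have hsr2 : (s / r) ^ 2 * a = s ^ 2 / (2 * b) := by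
      rw [div_pow, hr2]; field_simp
    have hkey : (s / r) * M > s ^ 2 / (2 * b) := by
      have h2 : (s / r) * ((s / r) * a) = s ^ 2 / (2 * b) := by
        rw [← hsr2]; ring
      have hsr : 0 < s / r := div_pos hde hrpos
      nlinarith
    have halg : (2 * (d:ℝ) * e + 1) - s ^ 2 / (2 * b) = 1 - ((d:ℝ) - b * e) ^ 2 / (2 * b) := by
      rw [hs]; field_simp; ring
    have hlt : (∑ i, ((m i : ℝ) - (s / r) * w i) ^ 2) < 1 - ((d:ℝ) - b * e) ^ 2 / (2 * b) := by
      rw [hquad, hsr2, ← halg]; nlinarith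
    refine ⟨hlt, ?_⟩
    have hnn : 0 ≤ ∑ i, ((m i : ℝ) - (s / r) * w i) ^ 2 :=
      Finset.sum_nonneg fun i _ => sq_nonneg _
    have hh2 : ((d:ℝ) - b * e) ^ 2 < 2 * b := by
      have : ((d:ℝ) - b * e) ^ 2 / (2 * b) < 1 := by linarith
      have h2b : (0:ℝ) < 2 * b := by positivity
      calc ((d:ℝ) - b * e) ^ 2 = ((d:ℝ) - b * e) ^ 2 / (2 * b) * (2 * b) := by field_simp
        _ < 1 * (2 * b) := by apply mul_lt_mul_of_pos_right this h2b
        _ = 2 * b := one_mul _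
    rw [show |(d:ℝ) - b * e| = Real.sqrt (((d:ℝ) - b * e) ^ 2) from (Real.sqrt_sq_eq_abs _).symm]
    exact Real.sqrt_lt_sqrt (sq_nonneg _) hh2
end

section
/- Let n̄ ≥ 2 be an integer and ε a real number with −1/2 < ε ≤ 1/2, and set b := n̄ + ε. Then (2n̄²+4n̄+1)/((2n̄+ε)(n̄+1)) > √((n̄+2)/(n̄+ε)) if and only if −n̄/(n̄+1)² < ε < 1/(n̄+2). (This is the condition that the obstruction of the class F_{n̄} at a = 2n̄+4 exceeds the volume constraint √((2n̄+4)/(2b)).) -/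
/-- Let `n̄ ≥ 2` be an integer, `ε` real with `−1/2 < ε ≤ 1/2`, and `b = n̄ + ε`. Then
`(2n̄²+4n̄+1)/((2n̄+ε)(n̄+1)) > √((n̄+2)/(n̄+ε))` iff `−n̄/(n̄+1)² < ε < 1/(n̄+2)`. -/
theorem stmt9 (n : ℤ) (hn : 2 ≤ n) (ε : ℝ) (hε1 : -(1/2 : ℝ) < ε) (hε2 : ε ≤ 1/2) :
    (2 * (n : ℝ) ^ 2 + 4 * n + 1) / ((2 * (n : ℝ) + ε) * ((n : ℝ) + 1))
        > Real.sqrt (((n : ℝ) + 2) / ((n : ℝ) + ε)) ↔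
      (-(n : ℝ) / ((n : ℝ) + 1) ^ 2 < ε ∧ ε < 1 / ((n : ℝ) + 2)) := by
  have hx : (2:ℝ) ≤ (n : ℝ) := by exact_mod_cast hn
  set x := (n : ℝ) with hxdef
  have h1 : 0 < x + ε := by linarith
  have h2 : 0 < 2 * x + ε := by linarith
  have h3 : 0 < x + 1 := by linarith
  have hD : 0 < (2 * x + ε) * (x + 1) := mul_pos h2 h3
  have hN : 0 < 2 * x ^ 2 + 4 * x + 1 := by nlinarith
  have hL : 0 < (2 * x ^ 2 + 4 * x + 1) / ((2 * x + ε) * (x + 1)) := div_pos hN hD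
  rw [gt_iff_lt, Real.sqrt_lt' hL, div_pow, div_lt_div_iff₀ h1 (pow_pos hD 2)]
  have key : (2 * x ^ 2 + 4 * x + 1) ^ 2 * (x + ε) - (x + 2) * ((2 * x + ε) * (x + 1)) ^ 2
      = ((x + 1) ^ 2 * ε + x) * (1 - (x + 2) * ε) := by ring
  constructor
  · intro h
    have hAB : 0 < ((x + 1) ^ 2 * ε + x) * (1 - (x + 2) * ε) := by nlinarith
    rcases mul_pos_iff.mp hAB with ⟨hA, hB⟩ | ⟨hA, hB⟩
    · constructor
      · rw [div_lt_iff₀ (by positivity)]; nlinarith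
      · rw [lt_div_iff₀ (by linarith)]; nlinarith
    · exfalso; nlinarith
  · rintro ⟨ha, hb⟩
    have hA : 0 < (x + 1) ^ 2 * ε + x := by
      rw [div_lt_iff₀ (by positivity)] at ha; nlinarith
    have hB : 0 < 1 - (x + 2) * ε := by
      rw [lt_div_iff₀ (by linarith)] at hb; nlinarith
    nlinarith [mul_pos hA hB]
end

section
/- Let b ≥ 2 be an integer and set v_b⁺ := 2b·((2b + 2⌊√(2b)⌋ + 1)/(2b + ⌊√(2b)⌋))². Then L(b, 3) := (2(3b + √(2b) + 3) − 1)/(6b + √(2b)) ≤ √(v_b⁺/(2b)) = (2b + 2⌊√(2b)⌋ + 1)/(2b + ⌊√(2b)⌋). -/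
/-- For an integer `b ≥ 2`, with `v_b⁺ = 2b·((2b+2⌊√(2b)⌋+1)/(2b+⌊√(2b)⌋))²`, we have
`L(b,3) = (2(3b+√(2b)+3)−1)/(6b+√(2b)) ≤ √(v_b⁺/(2b)) = (2b+2⌊√(2b)⌋+1)/(2b+⌊√(2b)⌋)`. -/
theorem stmt11 (b : ℤ) (hb : 2 ≤ b) :
    (2 * (3 * (b : ℝ) + Real.sqrt (2 * b) + 3) - 1) / (6 * (b : ℝ) + Real.sqrt (2 * b))
        ≤ Real.sqrt
            (2 * (b : ℝ) * ((2 * (b : ℝ) + 2 * (⌊Real.sqrt (2 * b)⌋ : ℝ) + 1)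
                / (2 * (b : ℝ) + (⌊Real.sqrt (2 * b)⌋ : ℝ))) ^ 2 / (2 * b)) ∧
    Real.sqrt
        (2 * (b : ℝ) * ((2 * (b : ℝ) + 2 * (⌊Real.sqrt (2 * b)⌋ : ℝ) + 1)
            / (2 * (b : ℝ) + (⌊Real.sqrt (2 * b)⌋ : ℝ))) ^ 2 / (2 * b))
      = (2 * (b : ℝ) + 2 * (⌊Real.sqrt (2 * b)⌋ : ℝ) + 1)
          / (2 * (b : ℝ) + (⌊Real.sqrt (2 * b)⌋ : ℝ)) := by
  have hbR : (2 : ℝ) ≤ (b : ℝ) := by exact_mod_cast hb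
  have h2b : (0 : ℝ) < 2 * (b : ℝ) := by linarith
  set s := Real.sqrt (2 * b) with hs
  have hs2 : s ^ 2 = 2 * (b : ℝ) := Real.sq_sqrt h2b.le
  have hsge : (2 : ℝ) ≤ s := by
    have : Real.sqrt 4 ≤ s := Real.sqrt_le_sqrt (by linarith)
    have h4 : Real.sqrt 4 = 2 := by
      rw [show (4 : ℝ) = 2 ^ 2 by norm_num, Real.sqrt_sq (by norm_num)]
    linarith [this, h4.symm.le.trans this]
  set f : ℝ := (⌊s⌋ : ℝ) with hf
  have hf1 : f ≤ s := Int.floor_le s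
  have hf2 : s < f + 1 := Int.lt_floor_add_one s
  have hfge : (2 : ℝ) ≤ f := by
    have : (2 : ℤ) ≤ ⌊s⌋ := Int.le_floor.mpr (by exact_mod_cast hsge)
    rw [hf]; exact_mod_cast this
  have hden : (0 : ℝ) < 2 * (b : ℝ) + f := by linarith
  have hnum : (0 : ℝ) < 2 * (b : ℝ) + 2 * f + 1 := by linarith
  have hX : (0 : ℝ) < (2 * (b : ℝ) + 2 * f + 1) / (2 * (b : ℝ) + f) :=
    div_pos hnum hden
  have heq : Real.sqrt (2 * (b : ℝ) * ((2 * (b : ℝ) + 2 * f + 1) / (2 * (b : ℝ) + f)) ^ 2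
      / (2 * b)) = (2 * (b : ℝ) + 2 * f + 1) / (2 * (b : ℝ) + f) := by
    rw [mul_comm (2 * (b : ℝ)), mul_div_assoc, div_self h2b.ne', mul_one,
      Real.sqrt_sq hX.le]
  refine ⟨?_, heq⟩
  rw [heq, div_le_div_iff₀ (by linarith) hden]
  nlinarith [mul_nonneg (mul_nonneg (sub_nonneg.2 hf1) (by linarith : (0:ℝ) ≤ f + 1 - s)) (by linarith : (0:ℝ) ≤ f - 2),
    mul_nonneg (sub_nonneg.2 hf1) (by linarith : (0:ℝ) ≤ f + 1 - s),
    mul_nonneg (mul_nonneg (sub_nonneg.2 hf1) (sub_nonneg.2 hf1)) (by linarith : (0:ℝ) ≤ f - 2),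
    sq_nonneg (s - f), sq_nonneg (f + 1 - s), hs2, mul_pos hden hden]
end

section
/- Let b ≥ 2 and k ≥ 2 be real numbers with k² ≤ 2b, and let a be a real number with v_b(k) ≤ a ≤ 2b+2k+2, where v_b(k) = 2b·((2b+2k+1)/(2b+k))². Set λ := √(a/(2b)). Then: (i) 2(λ−1) ≤ 1 + (2b+k)λ − (2b+2k+1); (ii) 0 ≤ (2b+k)λ − (2b+2k+1) ≤ a − (2b+2k+1). -/
/-- Let `b ≥ 2`, `k ≥ 2` be real with `k² ≤ 2b`, and `v_b(k) ≤ a ≤ 2b+2k+2` where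
`v_b(k) = 2b·((2b+2k+1)/(2b+k))²`. With `λ = √(a/(2b))`:
(i) `2(λ−1) ≤ 1 + (2b+k)λ − (2b+2k+1)`;
(ii) `0 ≤ (2b+k)λ − (2b+2k+1) ≤ a − (2b+2k+1)`. -/
theorem stmt13 (b k a : ℝ) (hb : 2 ≤ b) (hk : 2 ≤ k) (hk2 : k ^ 2 ≤ 2 * b)
    (ha1 : 2 * b * ((2 * b + 2 * k + 1) / (2 * b + k)) ^ 2 ≤ a)
    (ha2 : a ≤ 2 * b + 2 * k + 2) :
    2 * (Real.sqrt (a / (2 * b)) - 1)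
        ≤ 1 + ((2 * b + k) * Real.sqrt (a / (2 * b)) - (2 * b + 2 * k + 1)) ∧
    0 ≤ (2 * b + k) * Real.sqrt (a / (2 * b)) - (2 * b + 2 * k + 1) ∧
    (2 * b + k) * Real.sqrt (a / (2 * b)) - (2 * b + 2 * k + 1)
        ≤ a - (2 * b + 2 * k + 1) := by
  set s := Real.sqrt (a / (2 * b)) with hs
  set X := (2 * b + 2 * k + 1) / (2 * b + k) with hX
  have hb0 : (0:ℝ) < 2 * b := by linarith
  have hden : (0:ℝ) < 2 * b + k := by linarith
  have hden2 : (0:ℝ) < 2 * b + k - 2 := by linarith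
  have hkb : k ≤ b := by nlinarith
  have hX0 : 0 ≤ X := by positivity
  have hann : 0 ≤ a := le_trans (by positivity) ha1
  have ha0 : 0 ≤ a / (2 * b) := by positivity
  -- s ≥ X
  have hsq : X ^ 2 ≤ a / (2 * b) := by
    rw [le_div_iff₀ hb0]; nlinarith [ha1]
  have hs1 : X ≤ s := by
    rw [hs]
    exact (Real.le_sqrt hX0 ha0).mpr hsq
  have h1 : 2 * b + 2 * k + 1 ≤ (2 * b + k) * s := by
    have := (div_le_iff₀ hden).mp hs1
    linarith [this]
  -- (2b+2k-2)/(2b+k-2) ≤ X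
  have hA : (2 * b + 2 * k - 2) / (2 * b + k - 2) ≤ X := by
    rw [hX, div_le_div_iff₀ hden2 hden]
    nlinarith
  have h2 : 2 * b + 2 * k - 2 ≤ (2 * b + k - 2) * s := by
    have := (div_le_iff₀ hden2).mp (hA.trans hs1)
    linarith [this]
  -- (2b+k)/(2b) ≤ X
  have hB : (2 * b + k) / (2 * b) ≤ X := by
    rw [hX, div_le_div_iff₀ hb0 hden]
    nlinarith
  have h3 : 2 * b + k ≤ 2 * b * s := by
    have := (div_le_iff₀ hb0).mp (hB.trans hs1)
    linarith [this]
  have hs2 : s ^ 2 = a / (2 * b) := Real.sq_sqrt ha0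
  have hsnn : 0 ≤ s := Real.sqrt_nonneg _
  have ha' : a = 2 * b * s ^ 2 := by
    field_simp at hs2
    linarith [hs2]
  refine ⟨by linarith, by linarith, ?_⟩
  nlinarith [mul_nonneg hsnn (by linarith : (0:ℝ) ≤ 2 * b * s - (2 * b + k))]
end

section
/- Let b ≥ 2 and k ≥ 3 be real numbers, and let a be a real number with 2b+2k+1 ≤ a ≤ 2b+2k+2. Then (2b+k−1)·√(a/(2b)) ≥ a − 2. -/
/-- Let `b ≥ 2` and `k ≥ 3` be real, and `2b+2k+1 ≤ a ≤ 2b+2k+2`. Then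
`(2b+k−1)·√(a/(2b)) ≥ a − 2`. -/
theorem stmt14 (b k a : ℝ) (hb : 2 ≤ b) (hk : 3 ≤ k)
    (ha1 : 2 * b + 2 * k + 1 ≤ a) (ha2 : a ≤ 2 * b + 2 * k + 2) :
    (2 * b + k - 1) * Real.sqrt (a / (2 * b)) ≥ a - 2 := by
  have hb0 : (0:ℝ) < 2 * b := by linarith
  have ha0 : (0:ℝ) ≤ a / (2 * b) := by
    apply div_nonneg <;> linarith
  set s := Real.sqrt (a / (2 * b)) with hsdef
  have hs0 : 0 ≤ s := Real.sqrt_nonneg _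
  have hs2 : s ^ 2 = a / (2 * b) := Real.sq_sqrt ha0
  have hs2' : s ^ 2 * (2 * b) = a := by
    rw [hs2, div_mul_cancel₀ a hb0.ne']
  have key : (2*b+k-1)^2 * a ≥ (2*b) * (a-2)^2 := by
    nlinarith [mul_nonneg (show (0:ℝ) ≤ a - (2*b+2*k+1) by linarith)
        (show (0:ℝ) ≤ 2*b+2*k+2 - a by linarith),
      mul_nonneg (show (0:ℝ) ≤ k - 3 by linarith) (show (0:ℝ) ≤ 2*b by linarith),
      mul_nonneg (mul_nonneg (show (0:ℝ) ≤ k - 3 by linarith) (show (0:ℝ) ≤ k+1 by linarith)) (show (0:ℝ) ≤ 2*b by linarith),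
      sq_nonneg (k-1), sq_nonneg (2*b), mul_pos hb0 hb0]
  have h2 : (2*b) * ((a-2)^2) ≤ (2*b) * (((2*b+k-1)*s)^2) := by
    have e : (2*b) * (((2*b+k-1)*s)^2) = (2*b+k-1)^2 * (s^2 * (2*b)) := by ring
    rw [e, hs2']; linarith [key]
  have h1 : (a-2)^2 ≤ ((2*b+k-1)*s)^2 := le_of_mul_le_mul_left h2 hb0
  have h3 : 0 ≤ (2*b+k-1)*s := mul_nonneg (by linarith) hs0
  exact (pow_le_pow_iff_left₀ (by linarith) h3 two_ne_zero).mp h1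
end

section
/- Let b ≥ 2 be an integer and let a be a real number with v_b(2) ≤ a ≤ 2b+6, where v_b(2) = 2b·((2b+5)/(2b+2))². Then −(b+1)·(a−(2b+5)) + (2b²+5b+1)·√(a/(2b)) − (2b²+7b+5) ≥ 0. -/
set_option maxHeartbeats 800000

/-- Let `b ≥ 2` be an integer and `a` real with `v_b(2) ≤ a ≤ 2b+6`, where
`v_b(2) = 2b·((2b+5)/(2b+2))²`. Then
`−(b+1)·(a−(2b+5)) + (2b²+5b+1)·√(a/(2b)) − (2b²+7b+5) ≥ 0`. -/
theorem stmt15 (b : ℤ) (hb : 2 ≤ b) (a : ℝ)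
    (ha1 : 2 * (b : ℝ) * ((2 * (b : ℝ) + 5) / (2 * (b : ℝ) + 2)) ^ 2 ≤ a)
    (ha2 : a ≤ 2 * (b : ℝ) + 6) :
    -((b : ℝ) + 1) * (a - (2 * (b : ℝ) + 5))
        + (2 * (b : ℝ) ^ 2 + 5 * (b : ℝ) + 1) * Real.sqrt (a / (2 * (b : ℝ)))
        - (2 * (b : ℝ) ^ 2 + 7 * (b : ℝ) + 5) ≥ 0 := by
  have hbR : (2:ℝ) ≤ (b:ℝ) := by exact_mod_cast hb
  have hb0 : (0:ℝ) < 2 * (b:ℝ) := by linarith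
  have ht1pos : (0:ℝ) < (2*(b:ℝ)+5)/(2*(b:ℝ)+2) := by positivity
  -- cleared form of ha1
  have ha1' : 2*(b:ℝ)*(2*(b:ℝ)+5)^2 ≤ a*(2*(b:ℝ)+2)^2 := by
    rw [div_pow, ← mul_div_assoc, div_le_iff₀ (by positivity)] at ha1
    linarith
  have ha0 : (0:ℝ) ≤ a := by nlinarith
  set t := Real.sqrt (a / (2*(b:ℝ))) with htdef
  have ht0 : 0 ≤ t := Real.sqrt_nonneg _
  have htsq : t ^ 2 = a / (2*(b:ℝ)) := Real.sq_sqrt (div_nonneg ha0 hb0.le)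
  have ha_eq : a = 2*(b:ℝ) * t^2 := by
    field_simp at htsq; linarith
  -- lower bound on t
  have ht1 : (2*(b:ℝ)+5)/(2*(b:ℝ)+2) ≤ t := by
    rw [htdef]
    rw [show (2*(b:ℝ)+5)/(2*(b:ℝ)+2) = Real.sqrt (((2*(b:ℝ)+5)/(2*(b:ℝ)+2))^2) from
      (Real.sqrt_sq ht1pos.le).symm]
    apply Real.sqrt_le_sqrt
    rw [div_pow, div_le_div_iff₀ (by positivity) hb0]; nlinarith
  have ht1' : (2*(b:ℝ)+5) ≤ (2*(b:ℝ)+2) * t := by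
    rw [div_le_iff₀ (by positivity)] at ht1; linarith
  -- upper endpoint s
  set s := Real.sqrt (((b:ℝ)+3)/(b:ℝ)) with hsdef
  have hs0 : 0 ≤ s := Real.sqrt_nonneg _
  have hssq : s ^ 2 = ((b:ℝ)+3)/(b:ℝ) := Real.sq_sqrt (by positivity)
  have hssq' : (b:ℝ) * s^2 = (b:ℝ) + 3 := by
    field_simp at hssq; linarith
  have hts : t ≤ s := by
    rw [htdef, hsdef]
    apply Real.sqrt_le_sqrt
    rw [div_le_div_iff₀ hb0 (by positivity)]; nlinarith
  -- value at s : (2b²+5b+1)·s ≥ 2(b+1)(b+3)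
  have hq2 : 2*((b:ℝ)+1)*((b:ℝ)+3) ≤ (2*(b:ℝ)^2+5*(b:ℝ)+1) * s := by
    nlinarith [sq_nonneg ((b:ℝ)-1), hssq', hs0,
      sq_nonneg ((2*(b:ℝ)^2+5*(b:ℝ)+1)*s - 2*((b:ℝ)+1)*((b:ℝ)+3)),
      mul_nonneg hs0 (by linarith : (0:ℝ) ≤ (b:ℝ))]
  have h2 : 2*((b:ℝ)+1)*((b:ℝ)*s^2) = 2*((b:ℝ)+1)*((b:ℝ)+3) := by rw [hssq']
  clear_value t s
  rcases le_or_gt (4*(b:ℝ)*((b:ℝ)+1)*t) (2*(b:ℝ)^2+5*(b:ℝ)+1) with h | h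
  · -- t left of vertex: Q(t) ≥ Q(t₁) = t₁ > 0
    have key : 0 ≤ ((2*(b:ℝ)+2)*t - (2*(b:ℝ)+5)) *
        ((2*(b:ℝ)+2)*(2*(b:ℝ)^2+5*(b:ℝ)+1)
          - 2*(b:ℝ)*((b:ℝ)+1)*((2*(b:ℝ)+2)*t + (2*(b:ℝ)+5))) := by
      apply mul_nonneg (by linarith)
      nlinarith [ht1', h]
    nlinarith [key, ha_eq]
  · -- t right of vertex: Q(t) ≥ Q(s) ≥ 0
    have key : 0 ≤ (s - t) * (2*(b:ℝ)*((b:ℝ)+1)*(t+s) - (2*(b:ℝ)^2+5*(b:ℝ)+1)) := by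
      apply mul_nonneg (by linarith)
      nlinarith [hts, h.le]
    nlinarith [key, hq2, h2, ha_eq]
end

section
/- Let b ≥ 2 be an integer and let a be a real number with v_b(1) ≤ a ≤ α_b, where v_b(1) = 2b·((2b+3)/(2b+1))² and α_b = (b²+2b+√((b²+2b)²−1))/b. Set λ := √(a/(2b)). Then the following three inequalities hold: (1) (2b³+2b²−3b−1)λ + (1−b²)a ≥ 0; (2) −2−2b + (2b³−3b)λ + (1+b−b²)a ≥ 0; (3) −7−4b + b(2b²+2b−1)λ + (2−b²)a ≥ 0. -/
/-- Lower bound: `k ≤ c * u` when `B*u² = B+2`, from `k²*B ≤ c²*(B+2)`. -/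
lemma sqrt_bound_lower (B u c k : ℝ) (hB : 0 < B) (hu : 0 ≤ u)
    (hu2 : B * u ^ 2 = B + 2) (hc : 0 ≤ c) (hk : 0 ≤ k)
    (h : k ^ 2 * B ≤ c ^ 2 * (B + 2)) : k ≤ c * u := by
  have h2 : k ^ 2 * B ≤ c ^ 2 * B * u ^ 2 := by
    have e : c ^ 2 * B * u ^ 2 = c ^ 2 * (B * u ^ 2) := by ring
    rw [e, hu2]; exact h
  have h3 : k ^ 2 ≤ c ^ 2 * u ^ 2 := by nlinarith [h2, hB]
  nlinarith [h3, mul_nonneg hc hu, hk]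

/-- Upper bound: `c * u ≤ k` when `B*u² = B+2`, from `c²*(B+2) ≤ k²*B`. -/
lemma sqrt_bound_upper (B u c k : ℝ) (hB : 0 < B) (hu : 0 ≤ u)
    (hu2 : B * u ^ 2 = B + 2) (hc : 0 ≤ c) (hk : 0 ≤ k)
    (h : c ^ 2 * (B + 2) ≤ k ^ 2 * B) : c * u ≤ k := by
  have h2 : c ^ 2 * B * u ^ 2 ≤ k ^ 2 * B := by
    have e : c ^ 2 * B * u ^ 2 = c ^ 2 * (B * u ^ 2) := by ring
    rw [e, hu2]; exact h
  have h3 : c ^ 2 * u ^ 2 ≤ k ^ 2 := by nlinarith [h2, hB]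
  nlinarith [h3, mul_nonneg hc hu, hk]

set_option maxHeartbeats 4000000 in
/-- Let `b ≥ 2` be an integer and `a` real with `v_b(1) ≤ a ≤ α_b`, where
`v_b(1) = 2b·((2b+3)/(2b+1))²` and `α_b = (b²+2b+√((b²+2b)²−1))/b`. With `λ = √(a/(2b))`:
(1) `(2b³+2b²−3b−1)λ + (1−b²)a ≥ 0`;
(2) `−2−2b + (2b³−3b)λ + (1+b−b²)a ≥ 0`;
(3) `−7−4b + b(2b²+2b−1)λ + (2−b²)a ≥ 0`. -/
theorem stmt17 (b : ℤ) (hb : 2 ≤ b) (a : ℝ)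
    (ha1 : 2 * (b : ℝ) * ((2 * (b : ℝ) + 3) / (2 * (b : ℝ) + 1)) ^ 2 ≤ a)
    (ha2 : a ≤ ((b : ℝ) ^ 2 + 2 * (b : ℝ)
        + Real.sqrt (((b : ℝ) ^ 2 + 2 * (b : ℝ)) ^ 2 - 1)) / (b : ℝ)) :
    (2 * (b : ℝ) ^ 3 + 2 * (b : ℝ) ^ 2 - 3 * (b : ℝ) - 1) * Real.sqrt (a / (2 * (b : ℝ)))
        + (1 - (b : ℝ) ^ 2) * a ≥ 0 ∧
    -2 - 2 * (b : ℝ) + (2 * (b : ℝ) ^ 3 - 3 * (b : ℝ)) * Real.sqrt (a / (2 * (b : ℝ)))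
        + (1 + (b : ℝ) - (b : ℝ) ^ 2) * a ≥ 0 ∧
    -7 - 4 * (b : ℝ)
        + (b : ℝ) * (2 * (b : ℝ) ^ 2 + 2 * (b : ℝ) - 1) * Real.sqrt (a / (2 * (b : ℝ)))
        + (2 - (b : ℝ) ^ 2) * a ≥ 0 := by
  set B : ℝ := (b : ℝ) with hBdef
  have hB : (2 : ℝ) ≤ B := by rw [hBdef]; exact_mod_cast hb
  have hB0 : (0 : ℝ) < B := by linarith
  have hM : (0 : ℝ) < 2 * B + 1 := by linarith
  -- a is nonnegative
  have ha0 : 0 ≤ a := le_trans (by positivity) ha1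
  set s : ℝ := Real.sqrt (a / (2 * B)) with hsdef
  have hs0 : 0 ≤ s := Real.sqrt_nonneg _
  have hs2 : s ^ 2 = a / (2 * B) := Real.sq_sqrt (by positivity)
  have ha : a = 2 * B * s ^ 2 := by
    rw [hs2]; field_simp
  -- upper bound: a ≤ 2B + 4
  have hsqrt : Real.sqrt ((B ^ 2 + 2 * B) ^ 2 - 1) ≤ B ^ 2 + 2 * B := by
    calc Real.sqrt ((B ^ 2 + 2 * B) ^ 2 - 1) ≤ Real.sqrt ((B ^ 2 + 2 * B) ^ 2) :=
          Real.sqrt_le_sqrt (by nlinarith)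
      _ = B ^ 2 + 2 * B := Real.sqrt_sq (by nlinarith)
  have ha4 : a ≤ 2 * B + 4 := by
    have h1 : a ≤ (B ^ 2 + 2 * B + (B ^ 2 + 2 * B)) / B := by
      refine le_trans ha2 ?_
      gcongr
    have h2 : (B ^ 2 + 2 * B + (B ^ 2 + 2 * B)) / B = 2 * B + 4 := by
      field_simp; ring
    linarith [h2 ▸ h1]
  -- lower endpoint: (2B+3) ≤ (2B+1)s
  have hL : (2 * B + 3) / (2 * B + 1) ≤ s := by
    rw [hsdef]
    have h1 : ((2 * B + 3) / (2 * B + 1)) ^ 2 ≤ a / (2 * B) := by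
      rw [le_div_iff₀ (by positivity)]
      linarith [ha1]
    calc (2 * B + 3) / (2 * B + 1)
        = Real.sqrt (((2 * B + 3) / (2 * B + 1)) ^ 2) := (Real.sqrt_sq (by positivity)).symm
      _ ≤ Real.sqrt (a / (2 * B)) := Real.sqrt_le_sqrt h1
  have hp : 0 ≤ (2 * B + 1) * s - (2 * B + 3) := by
    have := (div_le_iff₀ hM).mp hL
    linarith
  -- the auxiliary point u with B u² = B + 2
  set u : ℝ := Real.sqrt ((B + 2) / B) with hudef
  have hu0 : 0 ≤ u := Real.sqrt_nonneg _
  have hu2' : u ^ 2 = (B + 2) / B := Real.sq_sqrt (by positivity)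
  have hu2 : B * u ^ 2 = B + 2 := by rw [hu2']; field_simp
  have htu : s ≤ u := by
    rw [hsdef, hudef]
    apply Real.sqrt_le_sqrt
    rw [div_le_div_iff₀ (by positivity) hB0]
    nlinarith [ha4]
  -- strict: (2B+3) < (2B+1) u
  have hMuL : 2 * B + 3 < (2 * B + 1) * u := by
    have h1 : (2 * B + 3) ^ 2 < ((2 * B + 1) * u) ^ 2 := by
      have e : ((2 * B + 1) * u) ^ 2 * B = (2 * B + 1) ^ 2 * (B * u ^ 2) := by ring
      rw [hu2] at e
      have e2 : (2 * B + 1) ^ 2 * (B + 2) = (2 * B + 3) ^ 2 * B + 2 := by ring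
      nlinarith [e, e2, hB0]
    exact lt_of_pow_lt_pow_left₀ 2 (by positivity) h1
  have hq : 0 ≤ u - s := by linarith
  have hBm2 : (0:ℝ) ≤ B - 2 := by linarith
  have hcube : (0:ℝ) ≤ (B-2)^3 := by positivity
  -- Part 1: (2B³-2B) u ≤ 2B³+2B²-3B-1
  have h1u : (2 * B ^ 3 - 2 * B) * u ≤ 2 * B ^ 3 + 2 * B ^ 2 - 3 * B - 1 := by
    apply sqrt_bound_upper B u _ _ hB0 hu0 hu2 (by nlinarith) (by nlinarith)
    have e : (2 * B ^ 3 + 2 * B ^ 2 - 3 * B - 1) ^ 2 * B - (2 * B ^ 3 - 2 * B) ^ 2 * (B + 2)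
        = B ^ 3 - 2 * B ^ 2 + B := by ring
    nlinarith [e, hBm2, hcube, mul_nonneg hBm2 hBm2]
  have part1 : (2 * B ^ 3 + 2 * B ^ 2 - 3 * B - 1) * s + (1 - B ^ 2) * a ≥ 0 := by
    rw [ha]
    have hCs : (2 * B ^ 3 - 2 * B) * s ≤ 2 * B ^ 3 + 2 * B ^ 2 - 3 * B - 1 := by
      have : (2 * B ^ 3 - 2 * B) * s ≤ (2 * B ^ 3 - 2 * B) * u :=
        mul_le_mul_of_nonneg_left htu (by nlinarith)
      linarith
    nlinarith [mul_nonneg hs0 (sub_nonneg.mpr hCs)]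
  -- Part 2: endpoint at u
  have hK2 : 2 * B ^ 3 + 2 * B ^ 2 - 4 * B - 2 ≤ (2 * B ^ 3 - 3 * B) * u := by
    apply sqrt_bound_lower B u _ _ hB0 hu0 hu2 (by nlinarith) (by nlinarith)
    have e : (2 * B ^ 3 - 3 * B) ^ 2 * (B + 2) - (2 * B ^ 3 + 2 * B ^ 2 - 4 * B - 2) ^ 2 * B
        = B ^ 3 + 2 * B ^ 2 - 4 * B := by ring
    nlinarith [e, hBm2, hcube, mul_nonneg hBm2 hBm2]
  have hf2u : 0 ≤ -2 - 2 * B + (2 * B ^ 3 - 3 * B) * u + (1 + B - B ^ 2) * (2 * B * u ^ 2) := by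
    have e : (1 + B - B ^ 2) * (2 * B * u ^ 2) = 2 * (1 + B - B ^ 2) * (B * u ^ 2) := by ring
    rw [e, hu2]
    nlinarith [hK2]
  -- Part 2 via concavity interpolation
  have part2 : -2 - 2 * B + (2 * B ^ 3 - 3 * B) * s + (1 + B - B ^ 2) * a ≥ 0 := by
    rw [ha]
    have H1 : 0 ≤ (u - s) * (2 * B ^ 2 - B - 2) := mul_nonneg hq (by nlinarith)
    have H2 : 0 ≤ ((2 * B + 1) * s - (2 * B + 3)) *
        (-2 - 2 * B + (2 * B ^ 3 - 3 * B) * u + (1 + B - B ^ 2) * (2 * B * u ^ 2)) :=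
      mul_nonneg hp hf2u
    have H3 : 0 ≤ (2 * B * (B ^ 2 - B - 1)) * (((2 * B + 1) * u - (2 * B + 3)) *
        (((2 * B + 1) * s - (2 * B + 3)) * (u - s))) := by
      apply mul_nonneg (by nlinarith)
      apply mul_nonneg (by linarith) (mul_nonneg hp hq)
    have key : 0 ≤ (2 * B + 1) ^ 2 * ((2 * B + 1) * u - (2 * B + 3)) *
        (-2 - 2 * B + (2 * B ^ 3 - 3 * B) * s + (1 + B - B ^ 2) * (2 * B * s ^ 2)) := by
      have e : (2 * B + 1) ^ 2 * ((2 * B + 1) * u - (2 * B + 3)) *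
          (-2 - 2 * B + (2 * B ^ 3 - 3 * B) * s + (1 + B - B ^ 2) * (2 * B * s ^ 2))
          = (2 * B + 1) * ((u - s) * (2 * B ^ 2 - B - 2))
            + (2 * B + 1) ^ 2 * (((2 * B + 1) * s - (2 * B + 3)) *
              (-2 - 2 * B + (2 * B ^ 3 - 3 * B) * u + (1 + B - B ^ 2) * (2 * B * u ^ 2)))
            + (2 * B + 1) * ((2 * B * (B ^ 2 - B - 1)) * (((2 * B + 1) * u - (2 * B + 3)) *
              (((2 * B + 1) * s - (2 * B + 3)) * (u - s)))) := by ring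
      rw [e]
      exact add_nonneg (add_nonneg (mul_nonneg hM.le H1)
        (mul_nonneg (sq_nonneg (2 * B + 1)) H2)) (mul_nonneg hM.le H3)
    have hpos : 0 < (2 * B + 1) ^ 2 * ((2 * B + 1) * u - (2 * B + 3)) := by
      apply mul_pos (by positivity) (by linarith)
    exact ge_iff_le.mpr ((mul_nonneg_iff_of_pos_left hpos).mp key)
  -- Part 3: endpoint at u
  have hK3 : 2 * B ^ 3 + 4 * B ^ 2 - 1 ≤ (2 * B ^ 3 + 2 * B ^ 2 - B) * u := by
    apply sqrt_bound_lower B u _ _ hB0 hu0 hu2 (by nlinarith) (by nlinarith)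
    have e : (2 * B ^ 3 + 2 * B ^ 2 - B) ^ 2 * (B + 2) - (2 * B ^ 3 + 4 * B ^ 2 - 1) ^ 2 * B
        = B ^ 3 + 2 * B ^ 2 - B := by ring
    nlinarith [e, hBm2, hcube, mul_nonneg hBm2 hBm2]
  have hf3u : 0 ≤ -7 - 4 * B + B * (2 * B ^ 2 + 2 * B - 1) * u + (2 - B ^ 2) * (2 * B * u ^ 2) := by
    have e : (2 - B ^ 2) * (2 * B * u ^ 2) = 2 * (2 - B ^ 2) * (B * u ^ 2) := by ring
    rw [e, hu2]
    nlinarith [hK3]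
  have part3 : -7 - 4 * B + B * (2 * B ^ 2 + 2 * B - 1) * s + (2 - B ^ 2) * a ≥ 0 := by
    rw [ha]
    have H1 : 0 ≤ (u - s) * (2 * B ^ 2 + B - 7) := mul_nonneg hq (by nlinarith)
    have H2 : 0 ≤ ((2 * B + 1) * s - (2 * B + 3)) *
        (-7 - 4 * B + B * (2 * B ^ 2 + 2 * B - 1) * u + (2 - B ^ 2) * (2 * B * u ^ 2)) :=
      mul_nonneg hp hf3u
    have H3 : 0 ≤ (2 * B * (B ^ 2 - 2)) * (((2 * B + 1) * u - (2 * B + 3)) *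
        (((2 * B + 1) * s - (2 * B + 3)) * (u - s))) := by
      apply mul_nonneg (by nlinarith)
      apply mul_nonneg (by linarith) (mul_nonneg hp hq)
    have key : 0 ≤ (2 * B + 1) ^ 2 * ((2 * B + 1) * u - (2 * B + 3)) *
        (-7 - 4 * B + B * (2 * B ^ 2 + 2 * B - 1) * s + (2 - B ^ 2) * (2 * B * s ^ 2)) := by
      have e : (2 * B + 1) ^ 2 * ((2 * B + 1) * u - (2 * B + 3)) *
          (-7 - 4 * B + B * (2 * B ^ 2 + 2 * B - 1) * s + (2 - B ^ 2) * (2 * B * s ^ 2))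
          = (2 * B + 1) * ((u - s) * (2 * B ^ 2 + B - 7))
            + (2 * B + 1) ^ 2 * (((2 * B + 1) * s - (2 * B + 3)) *
              (-7 - 4 * B + B * (2 * B ^ 2 + 2 * B - 1) * u + (2 - B ^ 2) * (2 * B * u ^ 2)))
            + (2 * B + 1) * ((2 * B * (B ^ 2 - 2)) * (((2 * B + 1) * u - (2 * B + 3)) *
              (((2 * B + 1) * s - (2 * B + 3)) * (u - s)))) := by ring
      rw [e]
      exact add_nonneg (add_nonneg (mul_nonneg hM.le H1)
        (mul_nonneg (sq_nonneg (2 * B + 1)) H2)) (mul_nonneg hM.le H3)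
    have hpos : 0 < (2 * B + 1) ^ 2 * ((2 * B + 1) * u - (2 * B + 3)) := by
      apply mul_pos (by positivity) (by linarith)
    exact ge_iff_le.mpr ((mul_nonneg_iff_of_pos_left hpos).mp key)
  exact ⟨part1, part2, part3⟩
end

section
/- Let b ≥ 3 be an integer and let a be a real number with v_b(1) ≤ a ≤ α_b, where v_b(1) = 2b·((2b+3)/(2b+1))² and α_b = (b²+2b+√((b²+2b)²−1))/b. Then (1+4b+2b²)·√(a/(2b)) + (1−b)·a ≥ 8 + 4b. -/
set_option maxHeartbeats 2000000

/-- Let `b ≥ 3` be an integer and `a` real with `v_b(1) ≤ a ≤ α_b`, where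
`v_b(1) = 2b·((2b+3)/(2b+1))²` and `α_b = (b²+2b+√((b²+2b)²−1))/b`. Then
`(1+4b+2b²)·√(a/(2b)) + (1−b)·a ≥ 8 + 4b`. -/
theorem stmt18 (b : ℤ) (hb : 3 ≤ b) (a : ℝ)
    (ha1 : 2 * (b : ℝ) * ((2 * (b : ℝ) + 3) / (2 * (b : ℝ) + 1)) ^ 2 ≤ a)
    (ha2 : a ≤ ((b : ℝ) ^ 2 + 2 * (b : ℝ)
        + Real.sqrt (((b : ℝ) ^ 2 + 2 * (b : ℝ)) ^ 2 - 1)) / (b : ℝ)) :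
    (1 + 4 * (b : ℝ) + 2 * (b : ℝ) ^ 2) * Real.sqrt (a / (2 * (b : ℝ)))
        + (1 - (b : ℝ)) * a ≥ 8 + 4 * (b : ℝ) := by
  have hB : (3:ℝ) ≤ (b:ℝ) := by exact_mod_cast hb
  set B : ℝ := (b:ℝ) with hBdef
  set r : ℝ := Real.sqrt ((B ^ 2 + 2 * B) ^ 2 - 1) with hrdef
  have hr0 : 0 ≤ r := Real.sqrt_nonneg _
  have hr2 : r ^ 2 = (B ^ 2 + 2 * B) ^ 2 - 1 := by
    rw [hrdef]
    exact Real.sq_sqrt (by nlinarith)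
  have hBpos : (0:ℝ) < B := by linarith
  -- clear denominators in the hypotheses
  have key1 : 2 * B * (2 * B + 3) ^ 2 ≤ a * (2 * B + 1) ^ 2 := by
    have h := ha1
    rw [div_pow, ← mul_div_assoc] at h
    exact (div_le_iff₀ (by positivity)).mp h
  have key2 : a * B ≤ B ^ 2 + 2 * B + r := (le_div_iff₀ hBpos).mp ha2
  have ha0 : 0 < a := by nlinarith [key1, sq_nonneg (2 * B + 1)]
  set s : ℝ := Real.sqrt (a / (2 * B)) with hsdef
  have hs0 : 0 ≤ s := Real.sqrt_nonneg _
  have hs2 : s ^ 2 = a / (2 * B) := by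
    rw [hsdef]
    exact Real.sq_sqrt (by positivity)
  have hsa : 2 * B * s ^ 2 = a := by
    rw [hs2]; field_simp
  -- lower bound for s
  have hx1 : (2 * B + 3) ^ 2 ≤ ((2 * B + 1) * s) ^ 2 := by
    have e : ((2 * B + 1) * s) ^ 2 * (2 * B) = (2 * B + 1) ^ 2 * a := by
      linear_combination (2 * B + 1) ^ 2 * hsa
    have h2B : (0:ℝ) < 2 * B := by linarith
    exact (mul_le_mul_iff_of_pos_right h2B).mp (by linarith [key1, e])
  have hX : 0 ≤ (2 * B + 1) * s - (2 * B + 3) := by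
    have := le_of_pow_le_pow_left₀ two_ne_zero
      (mul_nonneg (by linarith : (0:ℝ) ≤ 2 * B + 1) hs0) hx1
    linarith
  -- upper bound for s
  have hU2 : ((B + 1) ^ 2 + r) ^ 2 = 2 * (B + 1) ^ 2 * ((B ^ 2 + 2 * B) + r) := by
    linear_combination hr2
  have hy1 : (2 * B * (B + 1) * s) ^ 2 ≤ ((B + 1) ^ 2 + r) ^ 2 := by
    have e2 : (2 * B * (B + 1) * s) ^ 2 = 2 * (B + 1) ^ 2 * (a * B) := by
      linear_combination 2 * B * (B + 1) ^ 2 * hsa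
    have k2' := mul_le_mul_of_nonneg_left key2 (show (0:ℝ) ≤ 2 * (B + 1) ^ 2 by positivity)
    linarith [e2, hU2, k2']
  have hY : 0 ≤ (B + 1) ^ 2 + r - 2 * B * (B + 1) * s := by
    have := le_of_pow_le_pow_left₀ two_ne_zero
      (add_nonneg (sq_nonneg (B + 1)) hr0) hy1
    linarith
  -- the value at the upper endpoint is nonnegative
  have h1 : ((4 * B + 3) * r) ^ 2 - ((B + 1) * (4 * B ^ 2 + 7 * B - 1)) ^ 2
      = 8 * B ^ 3 + 6 * B ^ 2 - 12 * B - 10 := by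
    linear_combination (4 * B + 3) ^ 2 * hr2
  have h3 : (0:ℝ) ≤ 8 * B ^ 3 + 6 * B ^ 2 - 12 * B - 10 := by
    have c1 : (0:ℝ) ≤ B - 3 := by linarith
    nlinarith [mul_nonneg (mul_nonneg c1 c1) c1, mul_nonneg c1 c1, c1]
  have hE : 0 ≤ (4 * B + 3) * r - (B + 1) * (4 * B ^ 2 + 7 * B - 1) := by
    have := le_of_pow_le_pow_left₀ two_ne_zero
      (mul_nonneg (by linarith : (0:ℝ) ≤ 4 * B + 3) hr0)
      (by linarith [h1, h3] :
        ((B + 1) * (4 * B ^ 2 + 7 * B - 1)) ^ 2 ≤ ((4 * B + 3) * r) ^ 2)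
    linarith
  -- positivity of the interval length D
  have hd1 : ((2 * B + 1) * r) ^ 2 - ((B + 1) * (2 * B ^ 2 + 3 * B - 1)) ^ 2
      = 4 * B ^ 3 + 6 * B ^ 2 - 2 := by
    linear_combination (2 * B + 1) ^ 2 * hr2
  have hd3 : (0:ℝ) < 4 * B ^ 3 + 6 * B ^ 2 - 2 := by
    have c1 : (0:ℝ) ≤ B - 3 := by linarith
    nlinarith [mul_nonneg (mul_nonneg c1 c1) c1, mul_nonneg c1 c1, c1]
  have hD' : (B + 1) * (2 * B ^ 2 + 3 * B - 1) < (2 * B + 1) * r := by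
    have := lt_of_pow_lt_pow_left₀ 2
      (mul_nonneg (by linarith : (0:ℝ) ≤ 2 * B + 1) hr0)
      (by linarith [hd1, hd3] :
        ((B + 1) * (2 * B ^ 2 + 3 * B - 1)) ^ 2 < ((2 * B + 1) * r) ^ 2)
    linarith
  have hD : 0 < (2 * B + 1) * ((B + 1) ^ 2 + r) - 2 * B * (B + 1) * (2 * B + 3) := by
    have e : (2 * B + 1) * ((B + 1) ^ 2 + r) - 2 * B * (B + 1) * (2 * B + 3)
        = (2 * B + 1) * r - (B + 1) * (2 * B ^ 2 + 3 * B - 1) := by ring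
    linarith [e.ge, e.le, hD']
  have hG : (0:ℝ) ≤ 2 * B - 5 := by linarith
  -- the key algebraic identity (modulo r² = (B²+2B)² − 1)
  have hid :
      (((2 * B + 1) * ((B + 1) ^ 2 + r) - 2 * B * (B + 1) * (2 * B + 3))
        * ((2 * B + 1) ^ 2 * (4 * B ^ 2 * (B + 1) ^ 2)))
        * ((2 * B ^ 2 + 4 * B + 1) * s - 2 * B * (B - 1) * s ^ 2 - (8 + 4 * B))
      = (2 * B + 1) * (4 * B ^ 2 * (B + 1) ^ 2) * (2 * B - 5)
          * ((B + 1) ^ 2 + r - 2 * B * (B + 1) * s)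
        + (2 * B + 1) ^ 2 * (4 * B ^ 2 * (B + 1) ^ 2)
          * ((4 * B + 3) * r - (B + 1) * (4 * B ^ 2 + 7 * B - 1))
          * ((2 * B + 1) * s - (2 * B + 3))
        + 2 * B * (B - 1) * ((2 * B + 1) * s - (2 * B + 3))
          * ((B + 1) ^ 2 + r - 2 * B * (B + 1) * s)
          * ((2 * B + 1) * ((B + 1) ^ 2 + r) - 2 * B * (B + 1) * (2 * B + 3))
          * ((2 * B + 1) * (2 * B * (B + 1))) := by
    linear_combination (-12 * B ^ 2 + 4 * B ^ 2 * s - 56 * B ^ 3 + 24 * B ^ 3 * s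
      - 68 * B ^ 4 + 44 * B ^ 4 * s + 24 * B ^ 5 + 8 * B ^ 5 * s
      + 80 * B ^ 6 - 48 * B ^ 6 * s + 32 * B ^ 7 - 32 * B ^ 7 * s) * hr2
  -- every term of the right-hand side is nonnegative
  have t1 : (0:ℝ) ≤ (2 * B + 1) * (4 * B ^ 2 * (B + 1) ^ 2) * (2 * B - 5)
      * ((B + 1) ^ 2 + r - 2 * B * (B + 1) * s) :=
    mul_nonneg (mul_nonneg (mul_nonneg (by positivity) (by positivity)) hG) hY
  have t2 : (0:ℝ) ≤ (2 * B + 1) ^ 2 * (4 * B ^ 2 * (B + 1) ^ 2)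
      * ((4 * B + 3) * r - (B + 1) * (4 * B ^ 2 + 7 * B - 1))
      * ((2 * B + 1) * s - (2 * B + 3)) :=
    mul_nonneg (mul_nonneg (mul_nonneg (by positivity) (by positivity)) hE) hX
  have t3 : (0:ℝ) ≤ 2 * B * (B - 1) * ((2 * B + 1) * s - (2 * B + 3))
      * ((B + 1) ^ 2 + r - 2 * B * (B + 1) * s)
      * ((2 * B + 1) * ((B + 1) ^ 2 + r) - 2 * B * (B + 1) * (2 * B + 3))
      * ((2 * B + 1) * (2 * B * (B + 1))) := by
    have hb1 : (0:ℝ) ≤ 2 * B * (B - 1) := by nlinarith [hB]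
    exact mul_nonneg (mul_nonneg (mul_nonneg (mul_nonneg hb1 hX) hY) hD.le) (by positivity)
  have hDK : (0:ℝ) < ((2 * B + 1) * ((B + 1) ^ 2 + r) - 2 * B * (B + 1) * (2 * B + 3))
      * ((2 * B + 1) ^ 2 * (4 * B ^ 2 * (B + 1) ^ 2)) :=
    mul_pos hD (by positivity)
  have hgK : (0:ℝ) * (((2 * B + 1) * ((B + 1) ^ 2 + r) - 2 * B * (B + 1) * (2 * B + 3))
        * ((2 * B + 1) ^ 2 * (4 * B ^ 2 * (B + 1) ^ 2)))
      ≤ ((2 * B ^ 2 + 4 * B + 1) * s - 2 * B * (B - 1) * s ^ 2 - (8 + 4 * B))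
        * (((2 * B + 1) * ((B + 1) ^ 2 + r) - 2 * B * (B + 1) * (2 * B + 3))
        * ((2 * B + 1) ^ 2 * (4 * B ^ 2 * (B + 1) ^ 2))) := by
    rw [zero_mul, mul_comm]
    linarith [hid, t1, t2, t3]
  have hgoal : 0 ≤ (2 * B ^ 2 + 4 * B + 1) * s - 2 * B * (B - 1) * s ^ 2 - (8 + 4 * B) :=
    (mul_le_mul_iff_of_pos_right hDK).mp hgK
  -- conclude
  rw [← hsa]
  nlinarith [hgoal]
end

section
/- Let b ≥ 3 be an integer and let a be a real number with β_b ≤ a ≤ γ_b, where β_b = 2b+4+1/(2b(b+1)²) and γ_b = (2b+2)²/(2b). Set λ := √(a/(2b)), so a = 2bλ². Then: (1) 4bλ² − (2b²+4b+1)λ + 2(b²+b−2) ≤ 0, i.e., (2b²+4b+1)λ ≥ 2(a + b² + b − 2); (2) bλ² − (2b+1)λ + (b+1) ≤ 0, i.e., 2((2b+1)λ − (2b+3)) ≥ a − (2b+4). -/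
/-- Let `b ≥ 3` be an integer and `a` real with `β_b ≤ a ≤ γ_b`, where
`β_b = 2b+4+1/(2b(b+1)²)` and `γ_b = (2b+2)²/(2b)`. With `λ = √(a/(2b))`:
(1) `4bλ² − (2b²+4b+1)λ + 2(b²+b−2) ≤ 0`, i.e. `(2b²+4b+1)λ ≥ 2(a+b²+b−2)`;
(2) `bλ² − (2b+1)λ + (b+1) ≤ 0`, i.e. `2((2b+1)λ − (2b+3)) ≥ a − (2b+4)`. -/
theorem stmt19 (b : ℤ) (hb : 3 ≤ b) (a : ℝ)
    (ha1 : 2 * (b : ℝ) + 4 + 1 / (2 * (b : ℝ) * ((b : ℝ) + 1) ^ 2) ≤ a)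
    (ha2 : a ≤ (2 * (b : ℝ) + 2) ^ 2 / (2 * (b : ℝ))) :
    (4 * (b : ℝ) * Real.sqrt (a / (2 * (b : ℝ))) ^ 2
        - (2 * (b : ℝ) ^ 2 + 4 * (b : ℝ) + 1) * Real.sqrt (a / (2 * (b : ℝ)))
        + 2 * ((b : ℝ) ^ 2 + (b : ℝ) - 2) ≤ 0 ∧
      (2 * (b : ℝ) ^ 2 + 4 * (b : ℝ) + 1) * Real.sqrt (a / (2 * (b : ℝ)))
        ≥ 2 * (a + (b : ℝ) ^ 2 + (b : ℝ) - 2)) ∧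
    ((b : ℝ) * Real.sqrt (a / (2 * (b : ℝ))) ^ 2
        - (2 * (b : ℝ) + 1) * Real.sqrt (a / (2 * (b : ℝ))) + ((b : ℝ) + 1) ≤ 0 ∧
      2 * ((2 * (b : ℝ) + 1) * Real.sqrt (a / (2 * (b : ℝ))) - (2 * (b : ℝ) + 3))
        ≥ a - (2 * (b : ℝ) + 4)) := by
  have hB : (3 : ℝ) ≤ (b : ℝ) := by exact_mod_cast hb
  set B : ℝ := (b : ℝ) with hBdef
  have hBpos : (0 : ℝ) < B := by linarith
  have hB2 : (0 : ℝ) < 2 * B := by linarith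
  have hB1 : (0 : ℝ) < B + 1 := by linarith
  set l : ℝ := Real.sqrt (a / (2 * B)) with hl
  have hapos : (0 : ℝ) ≤ a := by
    have : 0 < 1 / (2 * B * (B + 1) ^ 2) := by positivity
    linarith
  have hql : a / (2 * B) = l ^ 2 := by
    rw [hl, Real.sq_sqrt (by positivity)]
  have hal : a = 2 * B * l ^ 2 := by
    field_simp at hql; linarith [hql]
  -- upper bound : l ≤ (B+1)/B
  have hup : B * l ≤ B + 1 := by
    have h1 : a / (2 * B) ≤ ((B + 1) / B) ^ 2 := by
      rw [div_le_iff₀ hB2]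
      have he : (2 * B + 2) ^ 2 / (2 * B) = ((B + 1) / B) ^ 2 * (2 * B) := by
        field_simp
      linarith [he ▸ ha2]
    have h2 : l ≤ (B + 1) / B := by
      rw [hl]
      calc Real.sqrt (a / (2 * B)) ≤ Real.sqrt (((B + 1) / B) ^ 2) :=
            Real.sqrt_le_sqrt h1
        _ = (B + 1) / B := Real.sqrt_sq (by positivity)
    calc B * l ≤ B * ((B + 1) / B) := by nlinarith
      _ = B + 1 := by field_simp
  -- lower bound : l ≥ (2B²+4B+1)/(2B(B+1))
  have hlow : 2 * B ^ 2 + 4 * B + 1 ≤ 2 * B * (B + 1) * l := by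
    have hD : (0 : ℝ) < (2 * B * (B + 1)) ^ 2 := by positivity
    have h1 : ((2 * B ^ 2 + 4 * B + 1) / (2 * B * (B + 1))) ^ 2 ≤ a / (2 * B) := by
      rw [div_pow, div_le_div_iff₀ hD hB2]
      have key : (2 * B + 4 + 1 / (2 * B * (B + 1) ^ 2)) * (2 * B * (B + 1)) ^ 2
          = (2 * B ^ 2 + 4 * B + 1) ^ 2 * (2 * B) := by
        field_simp; ring
      nlinarith [sq_nonneg (2 * B * (B + 1)), mul_le_mul_of_nonneg_right ha1
        (sq_nonneg (2 * B * (B + 1)))]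
    have h2 : (2 * B ^ 2 + 4 * B + 1) / (2 * B * (B + 1)) ≤ l := by
      rw [hl]
      calc (2 * B ^ 2 + 4 * B + 1) / (2 * B * (B + 1))
          = Real.sqrt (((2 * B ^ 2 + 4 * B + 1) / (2 * B * (B + 1))) ^ 2) :=
            (Real.sqrt_sq (by positivity)).symm
        _ ≤ Real.sqrt (a / (2 * B)) := Real.sqrt_le_sqrt h1
    have := mul_le_mul_of_nonneg_left h2 (le_of_lt (by positivity : (0:ℝ) < 2 * B * (B + 1)))
    calc 2 * B ^ 2 + 4 * B + 1
        = 2 * B * (B + 1) * ((2 * B ^ 2 + 4 * B + 1) / (2 * B * (B + 1))) := by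
          field_simp
      _ ≤ 2 * B * (B + 1) * l := this
  -- main quadratic inequalities
  have key2 : B * l ^ 2 - (2 * B + 1) * l + (B + 1) ≤ 0 := by
    have hl1 : 1 ≤ l := by nlinarith
    nlinarith [mul_nonneg (sub_nonneg.2 hl1) (sub_nonneg.2 hup)]
  have key1 : 4 * B * l ^ 2 - (2 * B ^ 2 + 4 * B + 1) * l + 2 * (B ^ 2 + B - 2) ≤ 0 := by
    nlinarith [mul_nonneg (sub_nonneg.2 hlow) (sub_nonneg.2 hup), sq_nonneg (B * l - B - 1),
      mul_pos hBpos hB1]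
  refine ⟨⟨key1, ?_⟩, key2, ?_⟩
  · rw [hal]; nlinarith [key1]
  · rw [hal]; nlinarith [key2]
end
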